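/- For all m, n ≥ 1, the order ⊑ is a well-quasi-order on T^ω_{≤m,<n}, the set of finite ω-labeled trees of height at most m with fewer than n nodes labeled 0. -/

import Mathlib

/-- `m ≼ n` iff `m = n = 0` or `0 < m ≤ n`. -/
def pre (m n : ℕ) : Prop := (m = 0 ∧ n = 0) ∨ (0 < m ∧ m ≤ n)

/-- A finite ω-labeled tree in standard representation: a root label, the list
of subtrees generated by the root's immediate successors labeled `0`, and the
list of those labeled `> 0` (the last one having minimal root label). -/
inductive OTree where
  | node : ℕ → List OTree → List OTree → OTree

/-- The root label of an ω-tree. -/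
def OTree.label : OTree → ℕ
  | node s _ _ => s

mutual
  /-- The height of an ω-tree. -/
  def OTree.height : OTree → ℕ
    | .node _ l r => 1 + max (OTree.heights l) (OTree.heights r)
  def OTree.heights : List OTree → ℕ
    | [] => 0
    | t :: ts => max t.height (OTree.heights ts)
end

mutual
  /-- The number of nodes labeled `0` in an ω-tree. -/
  def OTree.zeros : OTree → ℕ
    | .node s l r => (if s = 0 then 1 else 0) + OTree.zerosL l + OTree.zerosL r
  def OTree.zerosL : List OTree → ℕ
    | [] => 0
    | t :: ts => t.zeros + OTree.zerosL ts
end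

mutual
  /-- Well-formedness of the standard representation: subtrees in the first
  list have root label `0`, subtrees in the second list have positive root
  label, and the last of them has minimal root label. -/
  def OTree.wf : OTree → Prop
    | .node _ l r =>
      OTree.wfZ l ∧ OTree.wfP r ∧ (∀ a ∈ r.getLast?, ∀ t ∈ r, a.label ≤ t.label)
  def OTree.wfZ : List OTree → Prop
    | [] => True
    | t :: ts => t.label = 0 ∧ t.wf ∧ OTree.wfZ ts
  def OTree.wfP : List OTree → Prop
    | [] => True
    | t :: ts => 0 < t.label ∧ t.wf ∧ OTree.wfP ts
end

/-- The order `⊑` on ω-trees: `TSub t t'` iff the root labels are `≼`-related,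
the `0`-labeled subtree lists have the same length and are componentwise
related, and the positively labeled subtree lists are either both empty, or
both nonempty with the last of the first related to the last of the second and
a strictly monotone (Higman-style) embedding of the first list into the second
with componentwise relatedness. -/
inductive TSub : OTree → OTree → Prop where
  | nilR {s s' : ℕ} {l l' : List OTree} (hs : pre s s') (hlen : l.length = l'.length)
      (hl : ∀ i : Fin l.length, TSub (l.get i) (l'.get (Fin.cast hlen i))) :
      TSub (.node s l []) (.node s' l' [])
  | consR {s s' : ℕ} {l l' r r' : List OTree} (hs : pre s s') (hlen : l.length = l'.length)
      (hl : ∀ i : Fin l.length, TSub (l.get i) (l'.get (Fin.cast hlen i)))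
      (hr : r ≠ []) (hr' : r' ≠ [])
      (idx : Fin r.length → Fin r'.length) (hmono : StrictMono idx)
      (hcomp : ∀ i : Fin r.length, TSub (r.get i) (r'.get (idx i)))
      (hlast : ∀ a ∈ r.getLast?, ∀ b ∈ r'.getLast?, TSub a b) :
      TSub (.node s l r) (.node s' l' r')

section Aux

lemma pre_refl (s : ℕ) : pre s s := by rcases Nat.eq_zero_or_pos s with h|h <;> simp [pre, h]
lemma pre_trans {a b c : ℕ} (h1 : pre a b) (h2 : pre b c) : pre a c := by
  rcases h1 with ⟨h,h'⟩|⟨h,h'⟩ <;> rcases h2 with ⟨g,g'⟩|⟨g,g'⟩ <;> simp [pre] <;> omega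

instance : IsRefl ℕ pre := ⟨pre_refl⟩
instance : IsTrans ℕ pre := ⟨fun _ _ _ => pre_trans⟩
instance : IsPreorder ℕ pre := { refl := pre_refl, trans := fun _ _ _ => pre_trans }

theorem tsub_refl (t : OTree) : TSub t t := by
  suffices H : ∀ N, ∀ t : OTree, sizeOf t ≤ N → TSub t t from H (sizeOf t) t le_rfl
  intro N
  induction N with
  | zero => rintro ⟨s, l, r⟩ h; simp [OTree.node.sizeOf_spec] at h
  | succ N ih =>
    rintro ⟨s, l, r⟩ h
    simp only [OTree.node.sizeOf_spec] at h
    have hl : ∀ u ∈ l, TSub u u := fun u hu =>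
      ih u (by have := List.sizeOf_lt_of_mem hu; omega)
    have hr : ∀ u ∈ r, TSub u u := fun u hu =>
      ih u (by have := List.sizeOf_lt_of_mem hu; omega)
    cases r with
    | nil => exact TSub.nilR (pre_refl s) rfl (fun i => hl _ (l.get_mem i))
    | cons a r =>
      refine TSub.consR (pre_refl s) rfl (fun i => hl _ (l.get_mem i))
        (by simp) (by simp) id strictMono_id
        (fun i => hr _ ((a :: r).get_mem i)) ?_
      intro x hx y hy
      rw [List.getLast?_eq_getLast (by simp), Option.mem_some_iff] at hx hy
      subst hx; subst hy
      exact hr _ (List.getLast_mem _)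

theorem tsub_trans {t1 t2 t3 : OTree} (h12 : TSub t1 t2) (h23 : TSub t2 t3) : TSub t1 t3 := by
  suffices H : ∀ N, ∀ t1 t2 t3 : OTree, sizeOf t1 ≤ N → TSub t1 t2 → TSub t2 t3 → TSub t1 t3 from
    H (sizeOf t1) t1 t2 t3 le_rfl h12 h23
  clear h12 h23 t1 t2 t3
  intro N
  induction N with
  | zero => rintro ⟨s, l, r⟩ t2 t3 h; simp [OTree.node.sizeOf_spec] at h
  | succ N ih =>
    rintro ⟨s, l, r⟩ t2 t3 hsz h12 h23
    simp only [OTree.node.sizeOf_spec] at hsz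
    have ihl : ∀ u ∈ l, ∀ v w, TSub u v → TSub v w → TSub u w := fun u hu v w h1 h2 =>
      ih u v w (by have := List.sizeOf_lt_of_mem hu; omega) h1 h2
    have ihr : ∀ u ∈ r, ∀ v w, TSub u v → TSub v w → TSub u w := fun u hu v w h1 h2 =>
      ih u v w (by have := List.sizeOf_lt_of_mem hu; omega) h1 h2
    cases h12 with
    | nilR hs hlen hl =>
      cases h23 with
      | nilR hs' hlen' hl' =>
        exact TSub.nilR (pre_trans hs hs') (hlen.trans hlen')
          (fun i => ihl _ (l.get_mem i) _ _ (hl i) (hl' (Fin.cast hlen i)))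
      | consR _ _ _ hr _ _ _ _ _ => exact absurd rfl hr
    | consR hs hlen hl hr hr' idx hmono hcomp hlast =>
      cases h23 with
      | nilR => exact absurd rfl hr'
      | consR hs2 hlen2 hl2 hr2 hr2' idx2 hmono2 hcomp2 hlast2 =>
        refine TSub.consR (pre_trans hs hs2) (hlen.trans hlen2)
          (fun i => ihl _ (l.get_mem i) _ _ (hl i) (hl2 (Fin.cast hlen i)))
          hr hr2' (fun i => idx2 (idx i)) (hmono2.comp hmono)
          (fun i => ihr _ (r.get_mem i) _ _ (hcomp i) (hcomp2 (idx i))) ?_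
        intro a ha c hc
        have hb := List.getLast?_eq_getLast hr'
        exact ihr a (by
            rw [List.getLast?_eq_getLast hr, Option.mem_some_iff] at ha
            exact ha ▸ List.getLast_mem _) _ _
          (hlast a ha _ (by rw [hb]; rfl)) (hlast2 _ (by rw [hb]; rfl) c hc)

instance : IsRefl OTree TSub := ⟨tsub_refl⟩
instance : IsTrans OTree TSub := ⟨fun _ _ _ => tsub_trans⟩
instance : IsPreorder OTree TSub := { refl := tsub_refl, trans := fun _ _ _ => tsub_trans }

lemma heights_mem {t : OTree} {l : List OTree} (h : t ∈ l) : t.height ≤ OTree.heights l := by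
  induction l with
  | nil => simp at h
  | cons a ts ih =>
    rw [List.mem_cons] at h
    simp only [OTree.heights]
    rcases h with rfl|h
    · exact le_max_left _ _
    · exact (ih h).trans (le_max_right _ _)

lemma zerosL_mem {t : OTree} {l : List OTree} (h : t ∈ l) : t.zeros ≤ OTree.zerosL l := by
  induction l with
  | nil => simp at h
  | cons a ts ih =>
    rw [List.mem_cons] at h
    simp only [OTree.zerosL]
    rcases h with rfl|h
    · omega
    · have := ih h; omega

lemma wfZ_mem {t : OTree} {l : List OTree} (hw : OTree.wfZ l) (h : t ∈ l) :
    t.label = 0 ∧ t.wf := by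
  induction l with
  | nil => simp at h
  | cons a ts ih =>
    rw [List.mem_cons] at h
    simp only [OTree.wfZ] at hw
    rcases h with rfl|h
    · exact ⟨hw.1, hw.2.1⟩
    · exact ih hw.2.2 h

lemma wfP_mem {t : OTree} {l : List OTree} (hw : OTree.wfP l) (h : t ∈ l) :
    0 < t.label ∧ t.wf := by
  induction l with
  | nil => simp at h
  | cons a ts ih =>
    rw [List.mem_cons] at h
    simp only [OTree.wfP] at hw
    rcases h with rfl|h
    · exact ⟨hw.1, hw.2.1⟩
    · exact ih hw.2.2 h

lemma zeros_pos {t : OTree} (h : t.label = 0) : 1 ≤ t.zeros := by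
  obtain ⟨s, l, r⟩ := t
  simp [OTree.label] at h
  simp [OTree.zeros, h]
  omega

lemma length_le_zerosL {l : List OTree} (hw : OTree.wfZ l) : l.length ≤ OTree.zerosL l := by
  induction l with
  | nil => simp
  | cons a ts ih =>
    simp only [OTree.wfZ] at hw
    have := zeros_pos hw.1
    have := ih hw.2.2
    simp only [OTree.zerosL, List.length_cons]
    omega

/-- Trees of height at most `m`, with fewer than `n` zeros, well-formed. -/
def TS (m n : ℕ) : Set OTree := {t | t.wf ∧ t.height ≤ m ∧ t.zeros < n}

lemma pwo_inter {α : Type*} {s : Set α} {r1 r2 : α → α → Prop} [IsRefl α r1] [IsTrans α r1]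
    (h1 : s.PartiallyWellOrderedOn r1) (h2 : s.PartiallyWellOrderedOn r2) :
    s.PartiallyWellOrderedOn fun a b => r1 a b ∧ r2 a b := by
  haveI : IsPreorder α r1 := { refl := Std.Refl.refl, trans := IsTrans.trans }
  rw [Set.partiallyWellOrderedOn_iff_exists_lt] at h2 ⊢
  intro f hf
  obtain ⟨g, hg⟩ := h1.exists_monotone_subseq (f := f) hf
  obtain ⟨i, j, hij, hrel⟩ := h2 (f ∘ g) (fun n => hf _)
  exact ⟨g i, g j, g.strictMono hij, hg i j hij.le, hrel⟩

lemma pwo_imp {α : Type*} {s : Set α} {r1 r2 : α → α → Prop}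
    (h : ∀ a ∈ s, ∀ b ∈ s, r1 a b → r2 a b) (h1 : s.PartiallyWellOrderedOn r1) :
    s.PartiallyWellOrderedOn r2 := by
  rw [Set.partiallyWellOrderedOn_iff_exists_lt] at *
  intro f hf
  obtain ⟨i, j, hij, hrel⟩ := h1 f hf
  exact ⟨i, j, hij, h _ (hf i) _ (hf j) hrel⟩

lemma pwo_pre : (Set.univ : Set ℕ).PartiallyWellOrderedOn pre := by
  rw [Set.partiallyWellOrderedOn_iff_exists_lt]
  intro f _
  by_cases h : {i | f i = 0}.Infinite
  · obtain ⟨i, hi⟩ := h.nonempty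
    obtain ⟨j, hj, hij⟩ := h.exists_gt i
    exact ⟨i, j, hij, Or.inl ⟨hi, hj⟩⟩
  · rw [Set.not_infinite] at h
    obtain ⟨N, hN⟩ := h.bddAbove
    have hpos : ∀ i, N < i → 0 < f i := by
      intro i hi
      rcases Nat.eq_zero_or_pos (f i) with h0|h0
      · have : i ≤ N := hN h0
        omega
      · exact h0
    -- find a minimum of f on (N, ∞)
    obtain ⟨k, ⟨i, hiN, rfl⟩, hkmin⟩ :=
      wellFounded_lt.has_min (f '' {i | N < i}) ⟨f (N+1), N+1, Nat.lt_succ_self N, rfl⟩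
    refine ⟨i, i + 1, by omega, Or.inr ⟨hpos i hiN, ?_⟩⟩
    have := hkmin (f (i+1)) ⟨i+1, Nat.lt_succ_of_lt hiN, rfl⟩
    omega

lemma pwo_lenEq (n : ℕ) :
    {l : List OTree | l.length < n}.PartiallyWellOrderedOn
      (fun l l' => l.length = l'.length) := by
  rw [Set.partiallyWellOrderedOn_iff_exists_lt]
  intro f hf
  have hmap : ∀ i ∈ Finset.range (n+1), (f i).length ∈ Finset.range n :=
    fun i _ => Finset.mem_range.2 (hf i)
  have hcard : (Finset.range n).card < (Finset.range (n+1)).card := by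
    simp only [Finset.card_range]; omega
  obtain ⟨i, _, j, _, hne, heq⟩ :=
    Finset.exists_ne_map_eq_of_card_lt_of_maps_to hcard hmap
  rcases hne.lt_or_gt with h|h
  exacts [⟨i, j, h, heq⟩, ⟨j, i, h, heq.symm⟩]

lemma pwo_last {S : Set OTree} (hS : S.PartiallyWellOrderedOn TSub) :
    {l : List OTree | ∀ u ∈ l, u ∈ S}.PartiallyWellOrderedOn
      (fun l l' => ∀ a ∈ l.getLast?, ∀ b ∈ l'.getLast?, TSub a b) := by
  rw [Set.partiallyWellOrderedOn_iff_exists_lt] at *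
  intro f hf
  by_cases h : {i | f i = []}.Infinite
  · obtain ⟨i, hi⟩ := h.nonempty
    obtain ⟨j, hj, hij⟩ := h.exists_gt i
    refine ⟨i, j, hij, ?_⟩
    intro a ha
    rw [Set.mem_setOf_eq.mp hi] at ha
    simp at ha
  · rw [Set.not_infinite] at h
    obtain ⟨N, hN⟩ := h.bddAbove
    have hne : ∀ i, f (N+1+i) ≠ [] := by
      intro i hemp
      have := hN hemp
      omega
    obtain ⟨i, j, hij, hrel⟩ := hS (fun i => (f (N+1+i)).getLast (hne i))
      (fun i => hf _ _ (List.getLast_mem (hne i)))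
    refine ⟨N+1+i, N+1+j, by omega, ?_⟩
    intro a ha b hb
    rw [List.getLast?_eq_getLast (hne i), Option.mem_some_iff] at ha
    rw [List.getLast?_eq_getLast (hne j), Option.mem_some_iff] at hb
    exact ha ▸ hb ▸ hrel

lemma exists_idx {r r' : List OTree} (h : List.SublistForall₂ TSub r r') :
    ∃ idx : Fin r.length → Fin r'.length, StrictMono idx ∧
      ∀ i, TSub (r.get i) (r'.get (idx i)) := by
  obtain ⟨l'', h₁, h₂⟩ := List.sublistForall₂_iff.1 h
  obtain ⟨emb, hemb⟩ := List.sublist_iff_exists_fin_orderEmbedding_get_eq.1 h₂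
  have hlen := h₁.length_eq
  obtain ⟨-, hget⟩ := List.forall₂_iff_get.1 h₁
  refine ⟨fun i => emb (Fin.cast hlen i), ?_, ?_⟩
  · intro a b hab
    exact emb.strictMono (by simp only [Fin.lt_def, Fin.coe_cast]; exact hab)
  · intro i
    rw [← hemb]
    exact hget i i.isLt (by omega)

instance : IsRefl (List OTree) (List.Forall₂ TSub) := ⟨List.forall₂_refl⟩
instance : IsTrans (List OTree) (List.Forall₂ TSub) := by
  constructor
  intro a b c h1 h2
  rw [List.forall₂_iff_get] at h1 h2 ⊢
  obtain ⟨hl1, hg1⟩ := h1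
  obtain ⟨hl2, hg2⟩ := h2
  exact ⟨hl1.trans hl2, fun i hi1 hi2 =>
    tsub_trans (hg1 i hi1 (by omega)) (hg2 i (by omega) hi2)⟩
instance : IsPreorder (List OTree) (List.Forall₂ TSub) :=
  { refl := List.forall₂_refl, trans := fun a b c => IsTrans.trans a b c }

lemma forall₂_of_sub_len {l l' : List OTree} (h : List.SublistForall₂ TSub l l')
    (hlen : l.length = l'.length) : List.Forall₂ TSub l l' := by
  obtain ⟨l'', h₁, h₂⟩ := List.sublistForall₂_iff.1 h
  have heq : l'' = l' := h₂.eq_of_length (by rw [← h₁.length_eq, hlen])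
  subst heq
  exact h₁

lemma pwo_TS (n : ℕ) : ∀ m, (TS m n).PartiallyWellOrderedOn TSub := by
  intro m
  induction m with
  | zero =>
    rw [Set.partiallyWellOrderedOn_iff_exists_lt]
    intro f hf
    exfalso
    have h0 := (hf 0).2.1
    rcases hfe : f 0 with ⟨s, l, r⟩
    rw [hfe] at h0
    simp [OTree.height] at h0
  | succ m IH =>
    classical
    have hHig : {l : List OTree | ∀ x, x ∈ l → x ∈ TS m n}.PartiallyWellOrderedOn
        (List.SublistForall₂ TSub) := IH.partiallyWellOrderedOn_sublistForall₂ TSub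
    set LZ : Set (List OTree) := {l | (∀ u ∈ l, u ∈ TS m n) ∧ l.length < n} with hLZdef
    have hLZ : LZ.PartiallyWellOrderedOn (List.Forall₂ TSub) := by
      have h1 : LZ.PartiallyWellOrderedOn (List.SublistForall₂ TSub) :=
        hHig.mono (fun l hl u hu => hl.1 u hu)
      have h2 : LZ.PartiallyWellOrderedOn (fun l l' => l.length = l'.length) :=
        (pwo_lenEq n).mono (fun l hl => hl.2)
      exact pwo_imp (fun a _ b _ hab => forall₂_of_sub_len hab.1 hab.2) (pwo_inter h1 h2)
    set LP : Set (List OTree) := {l | (∀ u ∈ l, u ∈ TS m n) ∧ l ≠ []} with hLPdef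
    have hLP : LP.PartiallyWellOrderedOn (fun l l' => List.SublistForall₂ TSub l l' ∧
        ∀ a ∈ l.getLast?, ∀ b ∈ l'.getLast?, TSub a b) := by
      have h1 : LP.PartiallyWellOrderedOn (List.SublistForall₂ TSub) :=
        hHig.mono (fun l hl u hu => hl.1 u hu)
      have h2 : LP.PartiallyWellOrderedOn
          (fun l l' => ∀ a ∈ l.getLast?, ∀ b ∈ l'.getLast?, TSub a b) :=
        (pwo_last IH).mono (fun l hl => hl.1)
      exact pwo_inter h1 h2
    have hE : ((fun p : ℕ × List OTree => OTree.node p.1 p.2 []) ''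
        (Set.univ ×ˢ LZ)).PartiallyWellOrderedOn TSub := by
      refine Set.PartiallyWellOrderedOn.image_of_monotone_on (pwo_pre.prod hLZ) ?_
      rintro ⟨s1, l1⟩ ⟨-, hl1⟩ ⟨s2, l2⟩ ⟨-, hl2⟩ ⟨hp, hf⟩
      exact TSub.nilR hp hf.length_eq (fun i => hf.get i.isLt (by
        have := hf.length_eq; omega))
    have hF : ((fun p : ℕ × List OTree × List OTree => OTree.node p.1 p.2.1 p.2.2) ''
        (Set.univ ×ˢ LZ ×ˢ LP)).PartiallyWellOrderedOn TSub := by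
      refine Set.PartiallyWellOrderedOn.image_of_monotone_on (pwo_pre.prod (hLZ.prod hLP)) ?_
      rintro ⟨s1, l1, r1⟩ ⟨-, hl1, hr1⟩ ⟨s2, l2, r2⟩ ⟨-, hl2, hr2⟩ ⟨hp, hf, hsub, hlast⟩
      obtain ⟨idx, hmono, hcomp⟩ := exists_idx hsub
      exact TSub.consR hp hf.length_eq (fun i => hf.get i.isLt (by
        have := hf.length_eq; omega)) hr1.2 hr2.2 idx hmono hcomp hlast
    refine (hE.union hF).mono ?_
    rintro ⟨s, l, r⟩ ⟨hwf, hh, hz⟩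
    simp only [OTree.wf] at hwf
    simp only [OTree.height] at hh
    simp only [OTree.zeros] at hz
    have hz' : OTree.zerosL l + OTree.zerosL r < n := by split_ifs at hz <;> omega
    have hmemL : ∀ u ∈ l, u ∈ TS m n := fun u hu =>
      ⟨(wfZ_mem hwf.1 hu).2, (heights_mem hu).trans (by omega),
        by have := zerosL_mem hu; omega⟩
    have hmemR : ∀ u ∈ r, u ∈ TS m n := fun u hu =>
      ⟨(wfP_mem hwf.2.1 hu).2, (heights_mem hu).trans (by omega),
        by have := zerosL_mem hu; omega⟩
    have hlenl : l.length < n := (length_le_zerosL hwf.1).trans_lt (by omega)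
    cases r with
    | nil => exact Or.inl ⟨(s, l), ⟨Set.mem_univ _, hmemL, hlenl⟩, rfl⟩
    | cons a r =>
      exact Or.inr ⟨(s, l, a :: r), ⟨Set.mem_univ _, ⟨hmemL, hlenl⟩, hmemR, by simp⟩, rfl⟩

end Aux

/-- For all `m, n ≥ 1`, the order `⊑` is a well-quasi-order on the set of
(well-formed) finite ω-trees of height at most `m` with fewer than `n` nodes
labeled `0`: every infinite sequence of such trees has an infinite
`⊑`-chain subsequence. -/
theorem tsub_isWqo (m n : ℕ) (hm : 1 ≤ m) (hn : 1 ≤ n) (f : ℕ → OTree)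
    (hwf : ∀ i, (f i).wf) (hh : ∀ i, (f i).height ≤ m) (hz : ∀ i, (f i).zeros < n) :
    ∃ g : ℕ → ℕ, StrictMono g ∧ ∀ i j : ℕ, i < j → TSub (f (g i)) (f (g j)) := by
  obtain ⟨g, hg⟩ := (pwo_TS n m).exists_monotone_subseq (f := f) (fun i => ⟨hwf i, hh i, hz i⟩)
  exact ⟨g, g.strictMono, fun i j hij => hg i j hij.le⟩
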